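/- Let b ∈ (0,1), α ∈ (0,1], λ > 0, let m, n be positive integers, and let P : (0,1) → (0,1] satisfy lim_{u→0+} (-log P(1-u))/u^α = λ. Then (P(1-u))^m = (P(1-bu))^n for all u ∈ (0,1) — i.e., the sum of m independent copies of M is distributed as the sum of n independent copies of the Bernoulli(b)-thinning of M — if and only if b^α = m/n and P(1-u) = exp(-λ u^α) for all u ∈ (0,1). In particular the equation forces n > m. -/

import Mathlib

open Real Set Filter

/-- The sum of `m` independent copies of `M` is distributed as the sum of `n`
independent copies of the Bernoulli(b)-thinning of `M`, i.e.
`(P(1-u))^m = (P(1-bu))^n` on `(0,1)`, iff `b^α = m/n` and `M` is α-Poisson(λ).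
In particular the equation forces `n > m`. -/
theorem m_copies_eq_n_thinnings_iff_alpha_poisson (b α lam : ℝ)
    (hb : b ∈ Set.Ioo (0 : ℝ) 1) (hα : α ∈ Set.Ioc (0 : ℝ) 1) (hlam : 0 < lam)
    (m n : ℕ) (hm : 0 < m) (hn : 0 < n)
    (P : ℝ → ℝ) (hP : ∀ s ∈ Set.Ioo (0 : ℝ) 1, P s ∈ Set.Ioc (0 : ℝ) 1)
    (hlim : Filter.Tendsto (fun u : ℝ => (-Real.log (P (1 - u))) / u ^ α)
      (nhdsWithin 0 (Set.Ioi 0)) (nhds lam)) :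
    ((∀ u ∈ Set.Ioo (0 : ℝ) 1, (P (1 - u)) ^ m = (P (1 - b * u)) ^ n) ↔
      (b ^ α = (m : ℝ) / n ∧
        ∀ u ∈ Set.Ioo (0 : ℝ) 1, P (1 - u) = Real.exp (-(lam * u ^ α)))) ∧
    ((∀ u ∈ Set.Ioo (0 : ℝ) 1, (P (1 - u)) ^ m = (P (1 - b * u)) ^ n) → m < n) := by
  obtain ⟨hb0, hb1⟩ := hb
  obtain ⟨hα0, hα1⟩ := hα
  have hn0 : (0:ℝ) < (n:ℝ) := by exact_mod_cast hn
  have hm0 : (0:ℝ) < (m:ℝ) := by exact_mod_cast hm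
  have hbα : (0:ℝ) < b ^ α := Real.rpow_pos_of_pos hb0 α
  set f : ℝ → ℝ := fun u => -Real.log (P (1 - u)) with hf
  set r : ℝ := ((m:ℝ)/n) / b ^ α with hr
  -- main forward construction
  have forward : (∀ u ∈ Set.Ioo (0 : ℝ) 1, (P (1 - u)) ^ m = (P (1 - b * u)) ^ n) →
      (b ^ α = (m : ℝ) / n ∧
        ∀ u ∈ Set.Ioo (0 : ℝ) 1, P (1 - u) = Real.exp (-(lam * u ^ α))) := by
    intro H
    -- Step A : functional equation for f
    have hA : ∀ u ∈ Set.Ioo (0:ℝ) 1, f (b * u) = ((m:ℝ)/n) * f u := by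
      intro u hu
      have hbu : b * u ∈ Set.Ioo (0:ℝ) 1 := by
        constructor
        · exact mul_pos hb0 hu.1
        · calc b * u < 1 * u := by nlinarith [hu.1]
            _ = u := one_mul u
            _ < 1 := hu.2
      have hPu : 0 < P (1 - u) := (hP (1-u) (by constructor <;> [linarith [hu.2]; linarith [hu.1]])).1
      have hPbu : 0 < P (1 - b*u) := (hP (1-b*u) (by constructor <;> [linarith [hbu.2]; linarith [hbu.1]])).1
      have := congrArg Real.log (H u hu)
      rw [Real.log_pow, Real.log_pow] at this
      have : (n:ℝ) * f (b*u) = (m:ℝ) * f u := by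
        simp only [hf]
        linarith
      field_simp at this ⊢
      linarith
    -- Step B : iteration
    have hB : ∀ u ∈ Set.Ioo (0:ℝ) 1, ∀ k : ℕ,
        b ^ k * u ∈ Set.Ioo (0:ℝ) 1 ∧ f (b ^ k * u) = ((m:ℝ)/n) ^ k * f u := by
      intro u hu k
      induction k with
      | zero => simpa using hu
      | succ k ih =>
        obtain ⟨ihmem, ihval⟩ := ih
        have hx : b ^ (k+1) * u = b * (b ^ k * u) := by ring
        constructor
        · rw [hx]
          constructor
          · exact mul_pos hb0 ihmem.1
          · nlinarith [ihmem.1, ihmem.2]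
        · rw [hx, hA _ ihmem, ihval]
          ring
    -- key limit statement
    have key : ∀ u ∈ Set.Ioo (0:ℝ) 1,
        Tendsto (fun k : ℕ => r ^ k * (f u / u ^ α)) atTop (nhds lam) := by
      intro u hu
      have huα : (0:ℝ) < u ^ α := Real.rpow_pos_of_pos hu.1 α
      -- the sequence b^k u → 0 within Ioi 0
      have hseq : Tendsto (fun k : ℕ => b ^ k * u) atTop (nhdsWithin 0 (Set.Ioi 0)) := by
        rw [tendsto_nhdsWithin_iff]
        constructor
        · have := (tendsto_pow_atTop_nhds_zero_of_lt_one hb0.le hb1).mul_const u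
          simpa using this
        · exact Filter.Eventually.of_forall fun k => (hB u hu k).1.1
      have hcomp : Tendsto (fun k : ℕ => f (b ^ k * u) / (b ^ k * u) ^ α)
          atTop (nhds lam) := hlim.comp hseq
      have heq : (fun k : ℕ => f (b ^ k * u) / (b ^ k * u) ^ α)
          = fun k : ℕ => r ^ k * (f u / u ^ α) := by
        funext k
        have hbk : (0:ℝ) < b ^ k := pow_pos hb0 k
        have h1 : (b ^ k * u) ^ α = (b ^ k) ^ α * u ^ α :=
          Real.mul_rpow hbk.le hu.1.le
        have h2 : ((b:ℝ) ^ k) ^ α = (b ^ α) ^ k := by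
          rw [← Real.rpow_natCast b k, ← Real.rpow_mul hb0.le, mul_comm,
            Real.rpow_mul hb0.le, Real.rpow_natCast]
        rw [(hB u hu k).2, h1, h2, hr]
        have hne1 : ((n:ℝ)) ^ k ≠ 0 := pow_ne_zero k (ne_of_gt hn0)
        have hne2 : (b ^ α) ^ k ≠ 0 := pow_ne_zero k (ne_of_gt hbα)
        have hne3 : u ^ α ≠ 0 := ne_of_gt huα
        field_simp
        ring_nf
        rw [mul_assoc _ ((b ^ α) ^ k), inv_pow (b ^ α) k, mul_inv_cancel₀ hne2, mul_one]
      rwa [heq] at hcomp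
    -- r = 1
    have hhalf : (1/2 : ℝ) ∈ Set.Ioo (0:ℝ) 1 := by norm_num
    have hr1 : r = 1 := by
      have h := key _ hhalf
      have h2 : Tendsto (fun k : ℕ => r ^ (k+1) * (f (1/2) / (1/2:ℝ) ^ α)) atTop (nhds lam) :=
        h.comp (tendsto_add_atTop_nat 1)
      have h3 : Tendsto (fun k : ℕ => r * (r ^ k * (f (1/2) / (1/2:ℝ) ^ α)))
          atTop (nhds (r * lam)) := h.const_mul r
      have heq : (fun k : ℕ => r ^ (k+1) * (f (1/2) / (1/2:ℝ) ^ α))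
          = fun k : ℕ => r * (r ^ k * (f (1/2) / (1/2:ℝ) ^ α)) := by
        funext k; rw [pow_succ]; ring
      rw [heq] at h2
      have := tendsto_nhds_unique h2 h3
      have : (r - 1) * lam = 0 := by linarith
      rcases mul_eq_zero.mp this with h | h
      · linarith
      · exact absurd h (ne_of_gt hlam)
    have hbmn : b ^ α = (m:ℝ)/n := by
      have h := hr1
      rw [hr, div_eq_one_iff_eq (ne_of_gt hbα)] at h
      exact h.symm
    refine ⟨hbmn, fun u hu => ?_⟩
    have huα : (0:ℝ) < u ^ α := Real.rpow_pos_of_pos hu.1 α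
    have h := key u hu
    simp only [hr1, one_pow, one_mul] at h
    have hc : f u / u ^ α = lam := tendsto_nhds_unique tendsto_const_nhds h
    have hfu : f u = lam * u ^ α := by
      field_simp at hc
      linarith
    have hPu : 0 < P (1 - u) := (hP (1-u) (by constructor <;> [linarith [hu.2]; linarith [hu.1]])).1
    have : Real.log (P (1 - u)) = -(lam * u ^ α) := by
      simp only [hf] at hfu; linarith
    rw [← Real.exp_log hPu, this]
  constructor
  · constructor
    · exact forward
    · -- reverse direction
      rintro ⟨hbmn, hPform⟩ u hu
      have hbu : b * u ∈ Set.Ioo (0:ℝ) 1 := by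
        constructor
        · exact mul_pos hb0 hu.1
        · nlinarith [hu.1, hu.2]
      rw [hPform u hu, hPform (b*u) hbu, ← Real.exp_nat_mul, ← Real.exp_nat_mul]
      congr 1
      have h1 : (b * u) ^ α = b ^ α * u ^ α := Real.mul_rpow hb0.le hu.1.le
      rw [h1, hbmn]
      field_simp
  · intro H
    have hbmn := (forward H).1
    have hlt : b ^ α < 1 := Real.rpow_lt_one hb0.le hb1 hα0
    rw [hbmn] at hlt
    have : (m:ℝ) < n := by
      rw [div_lt_one hn0] at hlt
      exact hlt
    exact_mod_cast this
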